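/- Let p ≡ 1 (mod 4) be prime and (a,p) = 1. Define S(y) = ∑_{μ=0}^{p-1} ∑_{ν=0}^{p-1} μ χ(ν) ⌊(aμ + ay + ν)/p⌋ for real y. Then S(y) ≡ 0 (mod p) for all real y. -/

import Mathlib

open Finset

/-- floor of real division by a positive natural equals integer ediv of the floor. -/
private lemma floor_div_nat' (x : ℝ) (p : ℕ) (hp : 0 < p) :
    ⌊x / (p : ℝ)⌋ = ⌊x⌋ / (p : ℤ) := by
  have hpR : (0 : ℝ) < p := by exact_mod_cast hp
  have hpZ : (0 : ℤ) < p := by exact_mod_cast hp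
  have hmod := Int.mul_ediv_add_emod ⌊x⌋ (p : ℤ)
  have h0 : 0 ≤ ⌊x⌋ % (p : ℤ) := Int.emod_nonneg _ hpZ.ne'
  have h1 : ⌊x⌋ % (p : ℤ) < p := Int.emod_lt_of_pos _ hpZ
  refine Int.floor_eq_iff.mpr ⟨?_, ?_⟩
  · rw [le_div_iff₀ hpR]
    have hle : (⌊x⌋ / (p : ℤ)) * (p : ℤ) ≤ ⌊x⌋ := by linarith
    have : ((⌊x⌋ / (p : ℤ) : ℤ) : ℝ) * p ≤ (⌊x⌋ : ℝ) := by exact_mod_cast hle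
    linarith [Int.floor_le x]
  · rw [div_lt_iff₀ hpR]
    have hle : ⌊x⌋ + 1 ≤ (⌊x⌋ / (p : ℤ) + 1) * (p : ℤ) := by nlinarith
    have h2 : (⌊x⌋ : ℝ) + 1 ≤ ((⌊x⌋ / (p : ℤ) + 1 : ℤ) : ℝ) * p := by exact_mod_cast hle
    have h3 := Int.lt_floor_add_one x
    push_cast at h2 ⊢
    linarith

private lemma ediv_succ_sub (p : ℕ) (hp : 0 < p) (n : ℤ) :
    (n + 1) / (p : ℤ) - n / (p : ℤ) = if ((p : ℤ) ∣ (n + 1)) then 1 else 0 := by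
  have hpZ : (0 : ℤ) < p := by exact_mod_cast hp
  have hmod := Int.mul_ediv_add_emod n (p : ℤ)
  have h0 : 0 ≤ n % (p : ℤ) := Int.emod_nonneg _ hpZ.ne'
  have h1 : n % (p : ℤ) < p := Int.emod_lt_of_pos _ hpZ
  have hn1 : n + 1 = (n % (p : ℤ) + 1) + (p : ℤ) * (n / (p : ℤ)) := by linarith
  have hdiv : (n + 1) / (p : ℤ) = (n % (p : ℤ) + 1) / (p : ℤ) + n / (p : ℤ) := by
    rw [hn1, Int.add_mul_ediv_left _ _ hpZ.ne']
  by_cases hc : n % (p : ℤ) + 1 = p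
  · have hd : (p : ℤ) ∣ (n + 1) := ⟨1 + n / (p : ℤ), by rw [hn1, hc]; ring⟩
    rw [if_pos hd, hdiv, hc, Int.ediv_self hpZ.ne']; ring
  · have hlt : n % (p : ℤ) + 1 < p := lt_of_le_of_ne (Int.lt_iff_add_one_le.mp h1) hc
    have hd : ¬ ((p : ℤ) ∣ (n + 1)) := by
      intro hdvd
      have h3 : (p : ℤ) ∣ (p : ℤ) * (n / (p : ℤ)) := ⟨n / (p : ℤ), rfl⟩
      have h4 := hdvd.sub h3
      have heq : n + 1 - (p : ℤ) * (n / (p : ℤ)) = n % (p : ℤ) + 1 := by linarith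
      rw [heq] at h4
      have h5 := Int.le_of_dvd (by linarith) h4
      linarith
    rw [if_neg hd, hdiv, Int.ediv_eq_zero_of_lt (by linarith) hlt]; ring

/-- `F(c) = ∑_{μ < p} μ ⌊(aμ+c)/p⌋`. -/
private def Fsum (p : ℕ) (a c : ℤ) : ℤ :=
  ∑ μ ∈ Finset.range p, (μ : ℤ) * ((a * μ + c) / (p : ℤ))

/-- The unique `μ₀ ∈ [0,p)` with `a μ₀ + c + 1 ≡ 0 (mod p)`. -/
private noncomputable def wfun (p : ℕ) [Fact p.Prime] (a c : ℤ) : ℕ :=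
  ((-(((c : ZMod p)) + 1)) * (a : ZMod p)⁻¹).val

private lemma Fsum_step (p : ℕ) [Fact p.Prime] (a : ℤ) (ha : (a : ZMod p) ≠ 0) (c : ℤ) :
    Fsum p a (c + 1) - Fsum p a c = (wfun p a c : ℤ) := by
  have hp : 0 < p := (Fact.out : p.Prime).pos
  have : NeZero p := ⟨hp.ne'⟩
  set z : ZMod p := (-(((c : ZMod p)) + 1)) * (a : ZMod p)⁻¹ with hz
  have hwz : wfun p a c = z.val := rfl
  have hwlt : wfun p a c < p := by rw [hwz]; exact ZMod.val_lt z
  simp only [Fsum]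
  rw [← Finset.sum_sub_distrib]
  have key : ∀ μ ∈ Finset.range p,
      (μ : ℤ) * ((a * μ + (c + 1)) / (p : ℤ)) - (μ : ℤ) * ((a * μ + c) / (p : ℤ))
        = if μ = wfun p a c then (μ : ℤ) else 0 := by
    intro μ hμ
    have hμlt : μ < p := Finset.mem_range.mp hμ
    rw [← mul_sub]
    have harr : a * (μ : ℤ) + (c + 1) = (a * μ + c) + 1 := by ring
    rw [harr, ediv_succ_sub p hp]
    have hiff : ((a : ZMod p) * (μ : ZMod p) + (c : ZMod p) + 1 = 0) ↔ (μ : ZMod p) = z := by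
      rw [hz, eq_mul_inv_iff_mul_eq₀ ha, add_assoc, add_eq_zero_iff_eq_neg, mul_comm]
    have hcond : ((p : ℤ) ∣ (a * μ + c + 1)) ↔ μ = wfun p a c := by
      rw [← ZMod.intCast_zmod_eq_zero_iff_dvd]
      have hcast : ((a * (μ : ℤ) + c + 1 : ℤ) : ZMod p)
          = (a : ZMod p) * (μ : ZMod p) + (c : ZMod p) + 1 := by push_cast; ring
      rw [hcast, hiff]
      constructor
      · intro h
        have h' : ((μ : ZMod p)).val = z.val := by rw [h]
        rwa [ZMod.val_cast_of_lt hμlt, ← hwz] at h'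
      · intro h
        rw [h, hwz]
        exact ZMod.natCast_rightInverse z
    by_cases hd : (p : ℤ) ∣ (a * μ + c + 1)
    · rw [if_pos hd, if_pos (hcond.mp hd), mul_one]
    · rw [if_neg hd, if_neg fun h => hd (hcond.mpr h), mul_zero]
  rw [Finset.sum_congr rfl key,
    Finset.sum_ite_eq' (Finset.range p) (wfun p a c) (fun μ => (μ : ℤ)),
    if_pos (Finset.mem_range.mpr hwlt)]

private lemma Fsum_shift (p : ℕ) [Fact p.Prime] (a : ℤ) (ha : (a : ZMod p) ≠ 0) (b : ℤ)
    (ν : ℕ) :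
    Fsum p a (b + ν) = Fsum p a b + ∑ j ∈ Finset.range ν, (wfun p a (b + j) : ℤ) := by
  have htel := Finset.sum_range_sub (fun j : ℕ => Fsum p a (b + j)) ν
  have h2 : ∑ j ∈ Finset.range ν, (wfun p a (b + (j : ℤ)) : ℤ)
      = Fsum p a (b + (ν : ℤ)) - Fsum p a (b + ((0 : ℕ) : ℤ)) := by
    rw [← htel]
    refine Finset.sum_congr rfl fun j _ => ?_
    have harr : (b + ((j + 1 : ℕ) : ℤ)) = (b + j) + 1 := by push_cast; ring
    simp only [harr]
    rw [Fsum_step p a ha]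
  have h0 : (b + ((0 : ℕ) : ℤ)) = b := by simp
  rw [h2, h0]; ring

private lemma sum_range_zmod (p : ℕ) [NeZero p] {M : Type*} [AddCommMonoid M]
    (f : ZMod p → M) :
    ∑ ν ∈ Finset.range p, f (ν : ZMod p) = ∑ x : ZMod p, f x := by
  refine Finset.sum_nbij' (fun ν => ((ν : ℕ) : ZMod p)) (fun x => x.val) ?_ ?_ ?_ ?_ ?_
  · intro a _; exact Finset.mem_univ _
  · intro x _; exact Finset.mem_range.mpr (ZMod.val_lt x)
  · intro a ha; exact ZMod.val_cast_of_lt (Finset.mem_range.mp ha)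
  · intro x _; exact ZMod.natCast_rightInverse x
  · intro a _; rfl

/-- `S(y) = ∑_{μ,ν mod p} μ χ(ν) ⌊(aμ + ay + ν)/p⌋`. -/
noncomputable def Ssum (p : ℕ) [Fact p.Prime] (a : ℤ) (y : ℝ) : ℤ :=
  ∑ μ ∈ Finset.range p, ∑ ν ∈ Finset.range p,
    (μ : ℤ) * legendreSym p ν * ⌊(((a : ℝ) * μ + a * y + ν) / p)⌋

theorem Ssum_dvd (p : ℕ) [Fact p.Prime] (h4 : p % 4 = 1) (h5 : p ≠ 5)
    (a : ℤ) (ha : Int.gcd a p = 1) (y : ℝ) :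
    (p : ℤ) ∣ Ssum p a y := by
  have hpp : p.Prime := Fact.out
  have hp : 0 < p := hpp.pos
  have : NeZero p := ⟨hp.ne'⟩
  have hp2 : 2 ≤ p := hpp.two_le
  have haz : (a : ZMod p) ≠ 0 := by
    intro h
    have hdvd : (p : ℤ) ∣ a := (ZMod.intCast_zmod_eq_zero_iff_dvd a p).mp h
    have hdg : (p : ℤ) ∣ (Int.gcd a p : ℤ) := Int.dvd_coe_gcd hdvd ⟨1, by ring⟩
    rw [ha] at hdg
    have := Int.le_of_dvd one_pos hdg
    omega
  set b : ℤ := ⌊(a : ℝ) * y⌋ with hb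
  -- Step 1: rewrite floors as integer division
  have hfloor : ∀ μ ν : ℕ, ⌊(((a : ℝ) * μ + a * y + ν) / p)⌋
      = (a * μ + (b + ν)) / (p : ℤ) := by
    intro μ ν
    rw [floor_div_nat' _ p hp]
    congr 1
    have harr : ((a : ℝ) * μ + a * y + ν) = (a : ℝ) * y + ((a * μ + ν : ℤ) : ℝ) := by
      push_cast; ring
    rw [harr, Int.floor_add_intCast, hb]
    ring
  have hS : Ssum p a y = ∑ ν ∈ Finset.range p,
      (legendreSym p ν : ℤ) * Fsum p a (b + ν) := by
    unfold Ssum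
    rw [Finset.sum_comm]
    refine Finset.sum_congr rfl fun ν _ => ?_
    simp only [Fsum]
    rw [Finset.mul_sum]
    refine Finset.sum_congr rfl fun μ _ => ?_
    rw [hfloor μ ν]
    ring
  rw [← ZMod.intCast_zmod_eq_zero_iff_dvd]
  -- power sums vanish
  have hpow : ∀ k : ℕ, p / 2 + k < p - 1 →
      ∑ ν ∈ Finset.range p, ((legendreSym p ν : ℤ) : ZMod p) * ((ν : ZMod p)) ^ k = 0 := by
    intro k hk
    have hterm : ∀ ν ∈ Finset.range p,
        ((legendreSym p ν : ℤ) : ZMod p) * ((ν : ZMod p)) ^ k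
          = ((ν : ZMod p)) ^ (p / 2 + k) := by
      intro ν _
      rw [legendreSym.eq_pow, pow_add]
      push_cast
      ring
    rw [Finset.sum_congr rfl hterm,
      sum_range_zmod p (fun x : ZMod p => x ^ (p / 2 + k))]
    have hcard : Fintype.card (ZMod p) = p := ZMod.card p
    exact FiniteField.sum_pow_lt_card_sub_one (K := ZMod p) (p / 2 + k) (by rw [hcard]; exact hk)
  have hple : 9 ≤ p := by
    rcases Nat.lt_or_ge p 9 with h | h
    · interval_cases p <;> first | omega | exact absurd hpp (by norm_num)
    · exact h
  have hsig0 : ∑ ν ∈ Finset.range p, ((legendreSym p ν : ℤ) : ZMod p) = 0 := by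
    have h := hpow 0 (by omega)
    simpa using h
  have hsig1 : ∑ ν ∈ Finset.range p,
      ((legendreSym p ν : ℤ) : ZMod p) * (ν : ZMod p) = 0 := by
    have h := hpow 1 (by omega)
    simpa using h
  have hsig2 : ∑ ν ∈ Finset.range p,
      ((legendreSym p ν : ℤ) : ZMod p) * (ν : ZMod p) ^ 2 = 0 := hpow 2 (by omega)
  set A : ZMod p := (a : ZMod p)⁻¹ with hA
  set B : ZMod p := ((b : ℤ) : ZMod p) with hB
  have hw : ∀ j : ℕ, ((wfun p a (b + (j : ℤ)) : ℕ) : ZMod p) = -(B + (j : ZMod p) + 1) * A := by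
    intro j
    have h1 : ((wfun p a (b + (j : ℤ)) : ℕ) : ZMod p)
        = -((((b + (j : ℤ)) : ℤ) : ZMod p) + 1) * (a : ZMod p)⁻¹ :=
      ZMod.natCast_rightInverse _
    rw [h1]
    simp only [hA, hB]
    push_cast
    ring
  have hGaussNat : ∀ ν : ℕ, (∑ j ∈ Finset.range ν, (2 * j + 2)) = ν ^ 2 + ν := by
    intro ν
    induction ν with
    | zero => simp
    | succ k ih => rw [Finset.sum_range_succ, ih]; ring
  have hGauss : ∀ ν : ℕ, (∑ j ∈ Finset.range ν, ((2 : ZMod p) * (j : ZMod p) + 2))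
      = (ν : ZMod p) ^ 2 + (ν : ZMod p) := by
    intro ν
    have h1 : (∑ j ∈ Finset.range ν, ((2 : ZMod p) * (j : ZMod p) + 2))
        = (((∑ j ∈ Finset.range ν, (2 * j + 2)) : ℕ) : ZMod p) := by
      rw [Nat.cast_sum]
      refine Finset.sum_congr rfl fun j _ => ?_
      push_cast
      ring
    rw [h1, hGaussNat]
    push_cast
    ring
  have hsum2 : ∀ ν : ℕ, (2 : ZMod p) * (∑ j ∈ Finset.range ν, (-(B + (j : ZMod p) + 1) * A))
      = -(2 * B * A * (ν : ZMod p)) - A * ((ν : ZMod p) ^ 2 + (ν : ZMod p)) := by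
    intro ν
    rw [Finset.mul_sum]
    have h1 : ∀ j ∈ Finset.range ν, (2 : ZMod p) * (-(B + (j : ZMod p) + 1) * A)
        = -(2 * B * A) - A * ((2 : ZMod p) * (j : ZMod p) + 2) := fun j _ => by ring
    rw [Finset.sum_congr rfl h1, Finset.sum_sub_distrib, Finset.sum_const, Finset.card_range,
      ← Finset.mul_sum, hGauss]
    simp only [nsmul_eq_mul]
    ring
  have h2S : (2 : ZMod p) * ((Ssum p a y : ℤ) : ZMod p) = 0 := by
    rw [hS]
    push_cast
    rw [Finset.mul_sum]
    have hterm : ∀ ν ∈ Finset.range p,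
        (2 : ZMod p) * (((legendreSym p ν : ℤ) : ZMod p) * ((Fsum p a (b + ν) : ℤ) : ZMod p))
        = (2 * ((Fsum p a b : ℤ) : ZMod p)) * ((legendreSym p ν : ℤ) : ZMod p)
          - (2 * B * A) * (((legendreSym p ν : ℤ) : ZMod p) * (ν : ZMod p))
          - A * (((legendreSym p ν : ℤ) : ZMod p) * (ν : ZMod p) ^ 2)
          - A * (((legendreSym p ν : ℤ) : ZMod p) * (ν : ZMod p)) := by
      intro ν _
      rw [Fsum_shift p a haz b ν]
      push_cast
      rw [Finset.sum_congr rfl fun j _ => hw j]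
      linear_combination (((legendreSym p ν : ℤ) : ZMod p)) * hsum2 ν
    rw [Finset.sum_congr rfl hterm]
    simp only [Finset.sum_sub_distrib, ← Finset.mul_sum]
    rw [hsig0, hsig1, hsig2]
    ring
  have h2ne : (2 : ZMod p) ≠ 0 := by
    have h2 : ((2 : ℕ) : ZMod p) ≠ 0 := by
      rw [Ne, ZMod.natCast_eq_zero_iff]
      intro h
      have := Nat.le_of_dvd (by norm_num) h
      omega
    simpa using h2
  rcases mul_eq_zero.mp h2S with h | h
  · exact absurd h h2ne
  · exact h
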